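/- arXiv:1105.2415 — 2 statements merged into one kernel-verified Lean document; each statement's English description precedes it below -/
import Mathlib

section
/- Let P ⊆ ℝ^n be an n-dimensional rational simplex with facets F_0,…,F_n and opposite vertices v_0,…,v_n, and let a_i := d_{F_i}(v_i) be the lattice distance of v_i from its opposite facet F_i. Then τ(P) = μ(P) = Σ_{i=0}^{n} 1/a_i. -/
open scoped BigOperators Pointwise

noncomputable section

/-- Pairing `⟨a, x⟩ = ∑ aⱼ xⱼ` of an integer linear functional with a real point. -/
def ipair {n : ℕ} (a : Fin n → ℤ) (x : Fin n → ℝ) : ℝ := ∑ j, (a j : ℝ) * x j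

/-- An integer vector is primitive if it is nonzero and not a nontrivial integer
multiple of another integer vector. -/
def IsPrimitive {n : ℕ} (a : Fin n → ℤ) : Prop :=
  a ≠ 0 ∧ ∀ (k : ℤ) (b : Fin n → ℤ), a = k • b → IsUnit k

/-- The set of integer (lattice) points of `ℝⁿ`. -/
def IntPts (n : ℕ) : Set (Fin n → ℝ) := Set.range (fun z : Fin n → ℤ => fun j => (z j : ℝ))

/-- The dimension of a subset of `ℝⁿ` (the dimension of its affine hull). -/
def setDim {n : ℕ} (S : Set (Fin n → ℝ)) : ℕ := Module.finrank ℝ (vectorSpan ℝ S)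

/-- An irredundant facet description `P = {x : A x ≥ b}` of an `n`-dimensional
rational polytope: the rows `aᵢ` of `A` are primitive integer vectors, the right hand
sides are rational, `P` is bounded and `n`-dimensional, every inequality defines a facet
(a face of dimension `n-1`), and no inequality is repeated. -/
structure PolyDesc (n m : ℕ) : Type where
  hm : 0 < m
  A : Fin m → Fin n → ℤ
  b : Fin m → ℚ
  prim : ∀ i, IsPrimitive (A i)
  bounded : Bornology.IsBounded {x : Fin n → ℝ | ∀ i, (b i : ℝ) ≤ ipair (A i) x}
  fulldim : setDim {x : Fin n → ℝ | ∀ i, (b i : ℝ) ≤ ipair (A i) x} = n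
  facet_dim : ∀ i, setDim {x : Fin n → ℝ |
      (∀ j, (b j : ℝ) ≤ ipair (A j) x) ∧ ipair (A i) x = (b i : ℝ)} + 1 = n
  irredundant : Function.Injective (fun i => (A i, b i))

namespace PolyDesc

variable {n m : ℕ} (D : PolyDesc n m)

/-- The polytope `P` itself. -/
def pts : Set (Fin n → ℝ) := {x | ∀ i, (D.b i : ℝ) ≤ ipair (D.A i) x}

/-- Lattice distance `d_{Fᵢ}(x) = ⟨aᵢ, x⟩ - bᵢ` from (the hyperplane spanned by)
the `i`-th facet. -/
def dF (i : Fin m) (x : Fin n → ℝ) : ℝ := ipair (D.A i) x - (D.b i : ℝ)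

/-- Lattice distance `d_P(x) = minᵢ d_{Fᵢ}(x)` from the boundary of `P`. -/
def dist (x : Fin n → ℝ) : ℝ :=
  Finset.univ.inf'
    (Finset.univ_nonempty_iff.mpr (Fin.pos_iff_nonempty.mp D.hm))
    (fun i => D.dF i x)

/-- The adjoint polytope `P⁽ˢ⁾ = {x : d_P(x) ≥ s}`. -/
def adj (s : ℝ) : Set (Fin n → ℝ) := {x | s ≤ D.dist x}

/-- The `i`-th facet `Fᵢ` of `P`. -/
def facet (i : Fin m) : Set (Fin n → ℝ) := {x ∈ D.pts | ipair (D.A i) x = (D.b i : ℝ)}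

/-- The set `{s > 0 : P⁽ˢ⁾ ≠ ∅}`, whose supremum is `μ(P)⁻¹`. -/
def qcdInvSet : Set ℝ := {s : ℝ | 0 < s ∧ (D.adj s).Nonempty}

/-- `μ(P)⁻¹ = sup {s > 0 : P⁽ˢ⁾ ≠ ∅}`. -/
def qcdInv : ℝ := sSup D.qcdInvSet

/-- The ℚ-codegree `μ(P) = (sup {s > 0 : P⁽ˢ⁾ ≠ ∅})⁻¹`. -/
def qcd : ℝ := D.qcdInv⁻¹

/-- The core `core(P) = P^{(1/μ(P))}`. -/
def core : Set (Fin n → ℝ) := D.adj D.qcdInv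

/-- The codegree `cd(P) = min {k ∈ ℕ, k ≥ 1 : int(kP) ∩ ℤⁿ ≠ ∅}`. -/
def codeg : ℕ := sInf {k : ℕ | 0 < k ∧
  ∃ z : Fin n → ℤ, (fun j => (z j : ℝ)) ∈ interior ((k : ℝ) • D.pts)}

end PolyDesc

/-- The face of `S` on which the linear functional `u` is maximized. -/
def argFace {n : ℕ} (S : Set (Fin n → ℝ)) (u : Fin n → ℝ) : Set (Fin n → ℝ) :=
  {x ∈ S | ∀ y ∈ S, ∑ j, u j * y j ≤ ∑ j, u j * x j}

/-- `S` and `T` have the same normal fan: two linear functionals lie in the same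
(relatively open) cone of the normal fan of `S`, i.e. are maximized on the same face
of `S`, iff the same holds for `T`. -/
def SameNormalFan {n : ℕ} (S T : Set (Fin n → ℝ)) : Prop :=
  ∀ u v : Fin n → ℝ, (argFace S u = argFace S v ↔ argFace T u = argFace T v)

/-- The normal fan of `S` refines the normal fan of `T`. -/
def RefinesNormalFan {n : ℕ} (S T : Set (Fin n → ℝ)) : Prop :=
  ∀ u v : Fin n → ℝ, argFace S u = argFace S v → argFace T u = argFace T v

namespace PolyDesc
variable {n m : ℕ} (D : PolyDesc n m)

/-- `{s > 0 : N(P⁽ˢ⁾) = N(P)}`, whose supremum is `τ(P)⁻¹`. -/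
def nefInvSet : Set ℝ := {s : ℝ | 0 < s ∧ SameNormalFan (D.adj s) D.pts}

/-- `τ(P)⁻¹ = sup {s > 0 : N(P⁽ˢ⁾) = N(P)}`. -/
def nefInv : ℝ := sSup D.nefInvSet

/-- The nef value `τ(P)`. -/
def nefVal : ℝ := D.nefInv⁻¹

/-- The set of inequalities active at `x`; the normal cone of the minimal face of `P`
containing `x` is generated by `{aᵢ : i ∈ active x}`, and all cones of the normal fan
of `P` arise in this way. -/
def active (x : Fin n → ℝ) : Set (Fin m) := {i | ipair (D.A i) x = (D.b i : ℝ)}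

/-- The normal cone at the vertex `v` is ℚ-Gorenstein of index `r`, witnessed by the
primitive lattice point `u = u_σ` with `⟨aᵢ, u⟩ = r` for all active `i`. -/
def VertexQG (v : Fin n → ℝ) (u : Fin n → ℤ) (r : ℤ) : Prop :=
  IsPrimitive u ∧ 0 < r ∧ ∀ i ∈ D.active v, (∑ j, D.A i j * u j) = r

/-- The normal fan of `P` is ℚ-Gorenstein: every maximal cone (normal cone of a
vertex, i.e. of an extreme point) is ℚ-Gorenstein. -/
def QGorenstein : Prop := ∀ v ∈ Set.extremePoints ℝ D.pts, ∃ u r, D.VertexQG v u r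

end PolyDesc

/-- The point `v(s) = v + (s/r_σ) • u_σ`. -/
def vmove {n : ℕ} (v : Fin n → ℝ) (s : ℝ) (u : Fin n → ℤ) (r : ℤ) : Fin n → ℝ :=
  v + (s / (r : ℝ)) • (fun j => ((u j : ℝ)))

/-- The height of a point `y` in the cone generated by `{aᵢ : i ∈ I}`:
`ht(y) = max {∑ λᵢ : λᵢ ≥ 0, ∑ λᵢ aᵢ = y}`. -/
def coneHeight {n m : ℕ} (D : PolyDesc n m) (I : Set (Fin m)) (y : Fin n → ℝ) : ℝ :=
  sSup {t : ℝ | ∃ c : Fin m → ℝ, (∀ i, 0 ≤ c i) ∧ (∀ i ∉ I, c i = 0) ∧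
    (y = ∑ i, c i • (fun j => ((D.A i j : ℝ)))) ∧ t = ∑ i, c i}

/-- `P` is α-canonical: for every cone `σ` of the normal fan of `P` (the normal cone
of the minimal face containing a point `x ∈ P`, generated by `{aᵢ : i ∈ active x}`),
every nonzero lattice point of `σ` has height at least `α`. -/
def AlphaCanonical {n m : ℕ} (D : PolyDesc n m) (α : ℝ) : Prop :=
  ∀ x ∈ D.pts, ∀ z : Fin n → ℤ, z ≠ 0 →
    (∃ c : Fin m → ℝ, (∀ i, 0 ≤ c i) ∧ (∀ i ∉ D.active x, c i = 0) ∧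
      ((fun j => ((z j : ℝ))) = ∑ i, c i • (fun j => ((D.A i j : ℝ))))) →
    α ≤ coneHeight D (D.active x) (fun j => ((z j : ℝ)))

/-- `P` is a lattice polytope: the convex hull of finitely many integer points. -/
def IsLatticePoly {n : ℕ} (P : Set (Fin n → ℝ)) : Prop :=
  ∃ V : Finset (Fin n → ℤ),
    P = convexHull ℝ ((fun z : Fin n → ℤ => fun j => ((z j : ℝ))) '' (V : Set (Fin n → ℤ)))

/-- The `i`-th standard basis vector of `ℝᵗ`. -/
def stdBasisVec (t : ℕ) (i : Fin t) : Fin t → ℝ := fun j => if j = i then 1 else 0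

/-- The marking vectors of a Cayley sum: `0, e₁, …, e_t ∈ ℝᵗ`. -/
def cayleyVec (t : ℕ) : Fin (t + 1) → (Fin t → ℝ) :=
  fun j => if h : (j : ℕ) = 0 then 0 else stdBasisVec t ⟨(j : ℕ) - 1, by have := j.isLt; omega⟩

/-- The Cayley sum `Q₀ * ⋯ * Q_t = conv((Q₀ × {0}) ∪ (Q₁ × {e₁}) ∪ ⋯ ∪ (Q_t × {e_t}))`. -/
def cayleySum {k t : ℕ} (Q : Fin (t + 1) → Set (Fin k → ℝ)) :
    Set ((Fin k → ℝ) × (Fin t → ℝ)) :=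
  convexHull ℝ (⋃ j, (Q j) ×ˢ ({cayleyVec t j} : Set (Fin t → ℝ)))

/-- `P ⊆ ℝⁿ` is a Cayley polytope `P₀ * ⋯ * P_t` of length `t+1` of lattice polytopes
`Pⱼ ⊆ ℝᵏ` with `k + t = n`: some affine lattice isomorphism `ℤⁿ ≅ ℤᵏ × ℤᵗ`
identifies `P` with such a Cayley sum. -/
def IsCayley {n : ℕ} (P : Set (Fin n → ℝ)) (k t : ℕ) : Prop :=
  k + t = n ∧
  ∃ Q : Fin (t + 1) → Finset (Fin k → ℤ), (∀ j, (Q j).Nonempty) ∧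
  ∃ f : (Fin n → ℝ) ≃ᵃ[ℝ] (Fin k → ℝ) × (Fin t → ℝ),
    f '' IntPts n = (IntPts k) ×ˢ (IntPts t) ∧
    f '' P = cayleySum (fun j =>
      convexHull ℝ ((fun z : Fin k → ℤ => fun i => ((z i : ℝ))) '' (Q j : Set (Fin k → ℤ))))

/-- The unimodular simplex `Δₙ = conv(0, e₁, …, eₙ)`. -/
def unimodSimplex (n : ℕ) : Set (Fin n → ℝ) :=
  convexHull ℝ (insert (0 : Fin n → ℝ) (Set.range (stdBasisVec n)))

/-- Two subsets of `ℝⁿ` are unimodularly equivalent: an affine lattice automorphism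
maps one onto the other. -/
def UnimodEquiv {n : ℕ} (P P' : Set (Fin n → ℝ)) : Prop :=
  ∃ f : (Fin n → ℝ) ≃ᵃ[ℝ] (Fin n → ℝ), f '' IntPts n = IntPts n ∧ f '' P = P'

/-- The codegree `cd(P) = min {k ∈ ℕ, k ≥ 1 : int(kP) ∩ ℤⁿ ≠ ∅}` of a polytope given
as a set. -/
def codegS {n : ℕ} (P : Set (Fin n → ℝ)) : ℕ :=
  sInf {k : ℕ | 0 < k ∧ ∃ z : Fin n → ℤ, (fun j => (z j : ℝ)) ∈ interior ((k : ℝ) • P)}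

/-- `P` has lattice width one: some nonzero integer linear functional has minimum `c`
and maximum `c + 1` on `P`. -/
def HasLatticeWidthOne {n : ℕ} (P : Set (Fin n → ℝ)) : Prop :=
  ∃ u : Fin n → ℤ, u ≠ 0 ∧ ∃ c : ℤ,
    (∀ x ∈ P, (c : ℝ) ≤ ipair u x ∧ ipair u x ≤ (c : ℝ) + 1) ∧
    (∃ x ∈ P, ipair u x = (c : ℝ)) ∧ (∃ x ∈ P, ipair u x = (c : ℝ) + 1)

/-- `P` is a lattice pyramid: for some primitive `u`, `P` is the convex hull of a base
lying in the lattice hyperplane `{⟨u, ·⟩ = c}` and an apex at lattice distance one from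
it (this is equivalent to being unimodularly equivalent to
`conv((Q × {0}) ∪ {(0, …, 0, 1)})` for an `(n-1)`-dimensional lattice polytope `Q`). -/
def IsLatticePyramid {n : ℕ} (P : Set (Fin n → ℝ)) : Prop :=
  ∃ u : Fin n → ℤ, IsPrimitive u ∧ ∃ c : ℤ, ∃ apex ∈ P,
    ipair u apex = (c : ℝ) + 1 ∧
    P = convexHull ℝ ({x ∈ P | ipair u x = (c : ℝ)} ∪ {apex})

/-- `F` is a facet of `S`: an exposed face of dimension `dim S - 1`. -/
def IsFacetOf {n : ℕ} (F S : Set (Fin n → ℝ)) : Prop :=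
  IsExposed ℝ S F ∧ F.Nonempty ∧ setDim F + 1 = setDim S

private lemma ipair_comb {n : ℕ} (a : Fin n → ℤ) (c : ℝ) (x z : Fin n → ℝ) :
    ipair a (c • x + z) = c * ipair a x + ipair a z := by
  simp only [ipair, Pi.add_apply, Pi.smul_apply, smul_eq_mul, Finset.mul_sum]
  rw [← Finset.sum_add_distrib]
  exact Finset.sum_congr rfl fun j _ => by ring

private lemma ipair_sum_smul {n k : ℕ} (a : Fin n → ℤ) (w : Fin k → ℝ)
    (x : Fin k → Fin n → ℝ) :
    ipair a (∑ i, w i • x i) = ∑ i, w i * ipair a (x i) := by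
  simp only [ipair, Finset.sum_apply, Pi.smul_apply, smul_eq_mul, Finset.mul_sum]
  rw [Finset.sum_comm]
  exact Finset.sum_congr rfl fun i _ => Finset.sum_congr rfl fun j _ => by ring

private lemma pair_comb {n : ℕ} (u : Fin n → ℝ) (c : ℝ) (x z : Fin n → ℝ) :
    ∑ j, u j * (c • x + z) j = c * (∑ j, u j * x j) + ∑ j, u j * z j := by
  simp only [Pi.add_apply, Pi.smul_apply, smul_eq_mul, Finset.mul_sum]
  rw [← Finset.sum_add_distrib]
  exact Finset.sum_congr rfl fun j _ => by ring

private lemma argFace_homothety {n : ℕ} (S : Set (Fin n → ℝ)) {c : ℝ} (hc : 0 < c)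
    (z : Fin n → ℝ) (u : Fin n → ℝ) :
    argFace ((fun x => c • x + z) '' S) u = (fun x => c • x + z) '' argFace S u := by
  ext y
  constructor
  · rintro ⟨⟨x, hxS, rfl⟩, hmax⟩
    refine ⟨x, ⟨hxS, fun y' hy' => ?_⟩, rfl⟩
    have h := hmax _ ⟨y', hy', rfl⟩
    rw [pair_comb, pair_comb] at h
    have h2 : c * (∑ j, u j * y' j) ≤ c * (∑ j, u j * x j) := by linarith
    exact le_of_mul_le_mul_left h2 hc
  · rintro ⟨x, ⟨hxS, hmax⟩, rfl⟩
    refine ⟨⟨x, hxS, rfl⟩, ?_⟩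
    rintro _ ⟨y', hy', rfl⟩
    rw [pair_comb, pair_comb]
    have := hmax y' hy'
    nlinarith

/-- Let `P ⊆ ℝⁿ` be an `n`-dimensional rational simplex with
facets `F₀, …, Fₙ` and opposite vertices `v₀, …, vₙ` (so `vᵢ` lies on every facet
except `Fᵢ`), and let `aᵢ = d_{Fᵢ}(vᵢ)` be the lattice distance of `vᵢ` from `Fᵢ`.
Then `τ(P) = μ(P) = ∑ᵢ 1/aᵢ`. -/
theorem statement18 {n : ℕ} (D : PolyDesc n (n + 1))
    (v : Fin (n + 1) → (Fin n → ℝ))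
    (hsimplex : D.pts = convexHull ℝ (Set.range v))
    (hopp : ∀ i j : Fin (n + 1), i ≠ j → D.dF j (v i) = 0) :
    D.nefVal = ∑ i, (D.dF i (v i))⁻¹ ∧ D.qcd = ∑ i, (D.dF i (v i))⁻¹ := by
  rcases Nat.eq_zero_or_pos n with hn0 | hn
  · exfalso
    subst hn0
    exact (D.prim 0).1 (funext fun j => j.elim0)
  -- basic membership characterizations
  have hvP : ∀ i, v i ∈ D.pts := fun i => by
    rw [hsimplex]; exact subset_convexHull ℝ _ ⟨i, rfl⟩
  have hmem_pts : ∀ x, x ∈ D.pts ↔ ∀ j, 0 ≤ D.dF j x := by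
    intro x
    simp only [PolyDesc.pts, Set.mem_setOf_eq, PolyDesc.dF, sub_nonneg]
  have hmem_adj : ∀ (s : ℝ) (x : Fin n → ℝ), x ∈ D.adj s ↔ ∀ j, s ≤ D.dF j x := by
    intro s x
    simp only [PolyDesc.adj, Set.mem_setOf_eq, PolyDesc.dist, Finset.le_inf'_iff,
      Finset.mem_univ, true_implies]
  -- the key pairing computation on combinations of vertices
  have hip : ∀ (w : Fin (n + 1) → ℝ) (j : Fin (n + 1)),
      ipair (D.A j) (∑ i, w i • v i) = (∑ i, w i) * (D.b j : ℝ) + w j * D.dF j (v j) := by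
    intro w j
    rw [ipair_sum_smul]
    have hval : ∀ i, ipair (D.A j) (v i) = (D.b j : ℝ) + (if i = j then D.dF j (v j) else 0) := by
      intro i
      by_cases h : i = j
      · subst h
        rw [if_pos rfl]
        simp only [PolyDesc.dF]
        ring
      · have h0 := hopp i j h
        simp only [PolyDesc.dF] at h0
        simp only [if_neg h]
        linarith
    calc ∑ i, w i * ipair (D.A j) (v i)
        = ∑ i, (w i * (D.b j : ℝ) + w i * (if i = j then D.dF j (v j) else 0)) :=
          Finset.sum_congr rfl fun i _ => by rw [hval i]; ring
      _ = (∑ i, w i) * (D.b j : ℝ) + w j * D.dF j (v j) := by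
          rw [Finset.sum_add_distrib, ← Finset.sum_mul]
          congr 1
          simp [mul_ite, Finset.sum_ite_eq', Finset.mem_univ]
  have hdFcomb : ∀ (w : Fin (n + 1) → ℝ), (∑ i, w i) = 1 →
      ∀ j, D.dF j (∑ i, w i • v i) = w j * D.dF j (v j) := by
    intro w hw j
    have h1 := hip w j
    simp only [PolyDesc.dF] at h1 ⊢
    rw [h1, hw]
    ring
  -- positivity of the lattice distances aᵢ
  have hapos : ∀ i, 0 < D.dF i (v i) := by
    intro i
    rcases lt_or_eq_of_le ((hmem_pts (v i)).mp (hvP i) i) with h | h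
    · exact h
    exfalso
    obtain ⟨k, hk⟩ := Function.ne_iff.mp (D.prim i).1
    let ℓ : (Fin n → ℝ) →ₗ[ℝ] ℝ :=
      { toFun := ipair (D.A i)
        map_add' := fun x y => by
          simp only [ipair, Pi.add_apply, mul_add, Finset.sum_add_distrib]
        map_smul' := fun c x => by
          simp only [ipair, Pi.smul_apply, smul_eq_mul, RingHom.id_apply, Finset.mul_sum]
          exact Finset.sum_congr rfl fun j _ => by ring }
    have hall : Set.range v ⊆ {x | ℓ x = (D.b i : ℝ)} := by
      rintro _ ⟨j, rfl⟩
      show ipair (D.A i) (v j) = (D.b i : ℝ)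
      by_cases hji : j = i
      · subst hji
        have h' := h.symm
        simp only [PolyDesc.dF] at h'
        linarith
      · have h0 := hopp j i hji
        simp only [PolyDesc.dF] at h0
        linarith
    have hPsub : D.pts ⊆ {x | ℓ x = (D.b i : ℝ)} := by
      rw [hsimplex]
      exact convexHull_min hall (convex_hyperplane ℓ.isLinear _)
    have hker : vectorSpan ℝ D.pts ≤ LinearMap.ker ℓ := by
      rw [vectorSpan_def, Submodule.span_le]
      rintro _ ⟨x, hx, y, hy, rfl⟩
      have hx' := hPsub hx
      have hy' := hPsub hy
      simp only [Set.mem_setOf_eq] at hx' hy'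
      simp only [SetLike.mem_coe, LinearMap.mem_ker, vsub_eq_sub, map_sub, hx', hy', sub_self]
    have hne : LinearMap.ker ℓ ≠ ⊤ := by
      intro htop
      have hmem : ℓ (Pi.single k 1) = 0 := by
        rw [← LinearMap.mem_ker, htop]; trivial
      have hval : ℓ (Pi.single k 1) = (D.A i k : ℝ) := by
        show ipair (D.A i) (Pi.single k 1) = (D.A i k : ℝ)
        simp [ipair, Pi.single_apply, mul_ite, Finset.sum_ite_eq', Finset.mem_univ]
      rw [hval] at hmem
      have : D.A i k = 0 := by exact_mod_cast hmem
      simpa [this] using hk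
    have hlt : Module.finrank ℝ (LinearMap.ker ℓ) < n := by
      calc Module.finrank ℝ (LinearMap.ker ℓ) < Module.finrank ℝ (Fin n → ℝ) :=
            Submodule.finrank_lt hne
        _ = n := Module.finrank_fin_fun ℝ
    have hge : n ≤ Module.finrank ℝ (LinearMap.ker ℓ) := by
      have h3 : Module.finrank ℝ (vectorSpan ℝ D.pts) = n := D.fulldim
      calc n = Module.finrank ℝ (vectorSpan ℝ D.pts) := h3.symm
        _ ≤ Module.finrank ℝ (LinearMap.ker ℓ) := Submodule.finrank_mono hker
    omega
  -- the total sum S and the threshold t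
  set S : ℝ := ∑ i, (D.dF i (v i))⁻¹ with hS_def
  have hSpos : 0 < S :=
    Finset.sum_pos (fun i _ => inv_pos.mpr (hapos i)) ⟨0, Finset.mem_univ _⟩
  set t : ℝ := S⁻¹ with ht_def
  have htpos : 0 < t := inv_pos.mpr hSpos
  -- every point is an affine combination of the vertices
  have hspan : affineSpan ℝ (Set.range v) = ⊤ := by
    rw [AffineSubspace.affineSpan_eq_top_iff_vectorSpan_eq_top_of_nonempty ℝ (Fin n → ℝ) (Fin n → ℝ)
      (Set.range_nonempty v)]
    apply Submodule.eq_top_of_finrank_eq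
    have h2 : vectorSpan ℝ (convexHull ℝ (Set.range v)) = vectorSpan ℝ (Set.range v) := by
      rw [← direction_affineSpan, ← direction_affineSpan, affineSpan_convexHull]
    have h3 : Module.finrank ℝ (vectorSpan ℝ D.pts) = n := D.fulldim
    rw [hsimplex, h2] at h3
    rw [h3, Module.finrank_fin_fun ℝ]
  have hrep : ∀ x : Fin n → ℝ, ∃ w : Fin (n + 1) → ℝ, (∑ i, w i) = 1 ∧ x = ∑ i, w i • v i := by
    intro x
    have hx : x ∈ affineSpan ℝ (Set.range v) := hspan ▸ AffineSubspace.mem_top ℝ _ x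
    obtain ⟨w, hw, hxw⟩ := eq_affineCombination_of_mem_affineSpan_of_fintype hx
    exact ⟨w, hw, by
      rw [hxw, Finset.affineCombination_eq_linear_combination _ _ _ hw]⟩
  -- upper bound: a nonempty adjoint polytope forces s ≤ t
  have hub : ∀ s : ℝ, (D.adj s).Nonempty → s ≤ t := by
    rintro s ⟨x, hx⟩
    obtain ⟨w, hw1, rfl⟩ := hrep x
    rw [hmem_adj] at hx
    have hws : ∀ j, s * (D.dF j (v j))⁻¹ ≤ w j := by
      intro j
      have h1 := hx j
      rw [hdFcomb w hw1 j] at h1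
      rw [mul_inv_le_iff₀ (hapos j)]
      linarith
    have hsum : s * S ≤ 1 := by
      calc s * S = ∑ i, s * (D.dF i (v i))⁻¹ := by rw [hS_def, Finset.mul_sum]
        _ ≤ ∑ i, w i := Finset.sum_le_sum fun i _ => hws i
        _ = 1 := hw1
    have h2 := mul_le_mul_of_nonneg_right hsum (inv_nonneg.mpr hSpos.le)
    rw [mul_assoc, mul_inv_cancel₀ hSpos.ne', mul_one, one_mul] at h2
    exact h2
  -- the core point x* realizing s = t
  have hxstar : (∑ i, (t * (D.dF i (v i))⁻¹) • v i) ∈ D.adj t := by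
    rw [hmem_adj]
    intro j
    have hsum1 : ∑ i, t * (D.dF i (v i))⁻¹ = 1 := by
      rw [← Finset.mul_sum, ← hS_def, ht_def, inv_mul_cancel₀ hSpos.ne']
    rw [hdFcomb _ hsum1 j]
    have heq : t * (D.dF j (v j))⁻¹ * D.dF j (v j) = t := by
      rw [mul_assoc, inv_mul_cancel₀ (hapos j).ne', mul_one]
    exact le_of_eq heq.symm
  -- the Q-codegree computation
  have hqcdInv : D.qcdInv = t := by
    show sSup D.qcdInvSet = t
    refine IsGreatest.csSup_eq ⟨⟨htpos, ⟨_, hxstar⟩⟩, ?_⟩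
    rintro s ⟨_, hsne⟩
    exact hub s hsne
  -- for 0 < s < t, the adjoint polytope is a homothety of P
  have hSNF : ∀ s : ℝ, 0 < s → s < t → SameNormalFan (D.adj s) D.pts := by
    intro s hs0 hst
    have hsS : s * S < 1 := by
      have h1 := (mul_lt_mul_iff_left₀ hSpos).mpr hst
      rwa [ht_def, inv_mul_cancel₀ hSpos.ne'] at h1
    set c : ℝ := 1 - s * S with hc_def
    have hc : 0 < c := by rw [hc_def]; linarith
    set z : Fin n → ℝ := ∑ i, (s * (D.dF i (v i))⁻¹) • v i with hz_def
    have hzsum : ∑ i, s * (D.dF i (v i))⁻¹ = s * S := by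
      rw [← Finset.mul_sum, ← hS_def]
    have hkey : ∀ (x : Fin n → ℝ) (j : Fin (n + 1)),
        D.dF j (c • x + z) = c * D.dF j x + s := by
      intro x j
      have hz : ipair (D.A j) z = s * S * (D.b j : ℝ) + s := by
        rw [hz_def, hip, hzsum]
        have h4 : s * (D.dF j (v j))⁻¹ * D.dF j (v j) = s := by
          rw [mul_assoc, inv_mul_cancel₀ (hapos j).ne', mul_one]
        rw [h4]
      simp only [PolyDesc.dF]
      rw [ipair_comb, hz, hc_def]
      ring
    have himage : D.adj s = (fun x => c • x + z) '' D.pts := by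
      ext y
      rw [hmem_adj]
      constructor
      · intro hy
        have h2 : c • (c⁻¹ • (y - z)) + z = y := by
          rw [smul_smul, mul_inv_cancel₀ hc.ne', one_smul, sub_add_cancel]
        refine ⟨c⁻¹ • (y - z), ?_, h2⟩
        rw [hmem_pts]
        intro j
        have h1 := hy j
        rw [← h2, hkey] at h1
        by_contra hcon
        push_neg at hcon
        nlinarith
      · rintro ⟨x, hx, rfl⟩
        intro j
        rw [hkey]
        have h0 := (hmem_pts x).mp hx j
        nlinarith
    have hinj : Function.Injective (fun x : Fin n → ℝ => c • x + z) := by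
      intro x y hxy
      have h1 : c • x = c • y := by
        have h2 := congrArg (fun w => w - z) hxy
        simpa using h2
      exact smul_right_injective _ hc.ne' h1
    intro u w
    rw [himage, argFace_homothety _ hc, argFace_homothety _ hc]
    exact ⟨fun h => Set.image_injective.mpr hinj h, fun h => by rw [h]⟩
  -- upper bound for the nef set
  have hnefub : ∀ s ∈ D.nefInvSet, s ≤ t := by
    rintro s ⟨hs0, hsnf⟩
    by_cases hne : (D.adj s).Nonempty
    · exact hub s hne
    exfalso
    have hempty : D.adj s = ∅ := Set.not_nonempty_iff_eq_empty.mp hne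
    obtain ⟨i0, i1, hi01⟩ : ∃ i0 i1 : Fin (n + 1), i0 ≠ i1 :=
      ⟨⟨0, by omega⟩, ⟨1, by omega⟩, by simp [Fin.ext_iff]⟩
    have hP : argFace D.pts (fun j => (D.A i1 j : ℝ)) = argFace D.pts 0 := by
      have h5 := hsnf (fun j => (D.A i1 j : ℝ)) 0
      rw [hempty] at h5
      refine h5.mp ?_
      ext x
      simp [argFace]
    have hP0 : argFace D.pts 0 = D.pts := by
      ext x
      simp [argFace]
    have hv0 : v i0 ∈ argFace D.pts (fun j => (D.A i1 j : ℝ)) := by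
      rw [hP, hP0]; exact hvP i0
    obtain ⟨-, hmax⟩ := hv0
    have h1 : ipair (D.A i1) (v i1) ≤ ipair (D.A i1) (v i0) := hmax (v i1) (hvP i1)
    have e0 := hopp i0 i1 hi01
    simp only [PolyDesc.dF] at e0
    have e1 := hapos i1
    simp only [PolyDesc.dF] at e1
    linarith
  -- the nef value computation
  have hnefInv : D.nefInv = t := by
    show sSup D.nefInvSet = t
    apply csSup_eq_of_forall_le_of_forall_lt_exists_gt
    · exact ⟨t / 2, ⟨by positivity, hSNF _ (by positivity) (by linarith)⟩⟩
    · exact hnefub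
    · intro w hw
      have hmax1 : max w (t / 2) < t := max_lt hw (by linarith)
      have hmax2 : t / 2 ≤ max w (t / 2) := le_max_right _ _
      have hmax3 : w ≤ max w (t / 2) := le_max_left _ _
      exact ⟨(max w (t / 2) + t) / 2,
        ⟨by linarith, hSNF _ (by linarith) (by linarith)⟩, by linarith⟩
  constructor
  · show D.nefInv⁻¹ = S
    rw [hnefInv, ht_def, inv_inv]
  · show D.qcdInv⁻¹ = S
    rw [hqcdInv, ht_def, inv_inv]

end
end

section
/- Let P ⊆ ℝ^n be an n-dimensional lattice simplex with facets F_0,…,F_n, opposite vertices v_0,…,v_n, and a_i := d_{F_i}(v_i). Then: (1) if μ(P) > (n+1)/2, or μ(P) = (n+1)/2 and a_i ≠ 2 for some i, then P is a lattice pyramid; (2) if μ(P) ≥ (n+1)/2 and P is not unimodularly equivalent to 2Δ_n, then P has lattice width one. -/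
open scoped BigOperators Pointwise

noncomputable section

namespace S19

/-- `ipair` as a linear map. -/
def ipairL {n : ℕ} (a : Fin n → ℤ) : (Fin n → ℝ) →ₗ[ℝ] ℝ where
  toFun x := ipair a x
  map_add' x y := by simp [ipair, mul_add, Finset.sum_add_distrib]
  map_smul' c x := by simp [ipair, Finset.mul_sum]; ring_nf; simp [mul_comm, mul_left_comm]

@[simp] lemma ipairL_apply {n : ℕ} (a : Fin n → ℤ) (x : Fin n → ℝ) :
    ipairL a x = ipair a x := rfl

/-- `dF` as an affine map. -/
def dFA {n m : ℕ} (D : PolyDesc n m) (i : Fin m) : (Fin n → ℝ) →ᵃ[ℝ] ℝ where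
  toFun := D.dF i
  linear := ipairL (D.A i)
  map_vadd' p w := by
    simp only [PolyDesc.dF, ipairL_apply, ipair, vadd_eq_add, Pi.add_apply]
    simp [mul_add, Finset.sum_add_distrib]; ring

@[simp] lemma dFA_apply {n m : ℕ} (D : PolyDesc n m) (i : Fin m) (x : Fin n → ℝ) :
    dFA D i x = D.dF i x := rfl

variable {n : ℕ} (D : PolyDesc n (n+1)) (B : AffineBasis (Fin (n+1)) ℝ (Fin n → ℝ))

lemma dF_coord (hopp : ∀ i j, i ≠ j → D.dF j (B i) = 0) (i : Fin (n+1)) (x : Fin n → ℝ) :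
    D.dF i x = D.dF i (B i) * B.coord i x := by
  have hw : ∑ j, B.coord j x = 1 := B.sum_coord_apply_eq_one x
  conv_lhs => rw [← B.affineCombination_coord_eq_self x,
    show D.dF i = ⇑(dFA D i) from rfl,
    Finset.map_affineCombination _ _ _ hw (dFA D i),
    Finset.univ.affineCombination_eq_linear_combination _ _ hw]
  rw [Finset.sum_eq_single i]
  · simp [mul_comm]
  · intro j _ hj
    simp [hopp j i hj]
  · simp

lemma pts_coord (hsx : D.pts = convexHull ℝ (Set.range ⇑B)) :
    D.pts = {x | ∀ j, 0 ≤ B.coord j x} := by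
  rw [hsx, B.convexHull_eq_nonneg_coord]

lemma mem_pts_vertex (hsx : D.pts = convexHull ℝ (Set.range ⇑B)) (i : Fin (n+1)) :
    B i ∈ D.pts := by
  rw [hsx]; exact subset_convexHull ℝ _ (Set.mem_range_self i)

lemma dF_nonneg_of_mem {x : Fin n → ℝ} (hx : x ∈ D.pts) (i : Fin (n+1)) : 0 ≤ D.dF i x :=
  sub_nonneg.mpr (hx i)

lemma coord_nonneg (hsx : D.pts = convexHull ℝ (Set.range ⇑B)) {x : Fin n → ℝ}
    (hx : x ∈ D.pts) (i : Fin (n+1)) : 0 ≤ B.coord i x := by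
  rw [pts_coord D B hsx] at hx; exact hx i

lemma coord_le_one (hsx : D.pts = convexHull ℝ (Set.range ⇑B)) {x : Fin n → ℝ}
    (hx : x ∈ D.pts) (i : Fin (n+1)) : B.coord i x ≤ 1 := by
  have h1 : ∑ j, B.coord j x = 1 := B.sum_coord_apply_eq_one x
  have := Finset.single_le_sum (f := fun j => B.coord j x)
    (fun j _ => coord_nonneg D B hsx hx j) (Finset.mem_univ i)
  linarith

lemma apos (hopp : ∀ i j, i ≠ j → D.dF j (B i) = 0)
    (hsx : D.pts = convexHull ℝ (Set.range ⇑B)) (i : Fin (n+1)) :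
    0 < D.dF i (B i) := by
  rcases lt_or_eq_of_le (dF_nonneg_of_mem D (mem_pts_vertex D B hsx i) i) with h | h
  · exact h
  exfalso
  have hz : ∀ x, D.dF i x = 0 := by
    intro x; rw [dF_coord D B hopp i x, ← h]; ring
  have hb0 : (D.b i : ℝ) = 0 := by
    have := hz 0
    simp [PolyDesc.dF, ipair] at this
    exact_mod_cast this
  have hA0 : D.A i = 0 := by
    funext k
    have := hz (fun j => if j = k then 1 else 0)
    simp [PolyDesc.dF, ipair, hb0, mul_ite, Finset.sum_ite_eq'] at this
    exact_mod_cast this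
  exact (D.prim i).1 hA0

/-- Every vertex of the simplex is a lattice point. -/
lemma vertex_lattice (hsx : D.pts = convexHull ℝ (Set.range ⇑B))
    (hlat : IsLatticePoly D.pts) (i : Fin (n+1)) :
    ∃ z : Fin n → ℤ, B i = fun j => (z j : ℝ) := by
  classical
  obtain ⟨V, hV⟩ := hlat
  set s : Finset (Fin n → ℝ) := V.image (fun z : Fin n → ℤ => fun j => (z j : ℝ)) with hs
  have hVs : D.pts = convexHull ℝ (↑s : Set (Fin n → ℝ)) := by
    rw [hV, ← Finset.coe_image]
  have hBi : B i ∈ convexHull ℝ (↑s : Set (Fin n → ℝ)) := by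
    rw [← hVs]; exact mem_pts_vertex D B hsx i
  rw [Finset.convexHull_eq] at hBi
  obtain ⟨w, hw0, hw1, hcm⟩ := hBi
  have hmem : ∀ y ∈ s, y ∈ D.pts := by
    intro y hy
    rw [hVs]; exact subset_convexHull ℝ _ hy
  -- B i as affine combination
  have hcomb : s.affineCombination ℝ id w = B i := by
    rw [Finset.affineCombination_eq_linear_combination _ _ _ hw1, ← hcm,
      Finset.centerMass_eq_of_sum_1 _ _ hw1]
  have hci : ∀ y ∈ s, B.coord i y ≤ 1 := fun y hy => coord_le_one D B hsx (hmem y hy) i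
  have hsum1 : ∑ y ∈ s, w y * B.coord i y = 1 := by
    have := Finset.map_affineCombination s id w hw1 (B.coord i)
    rw [hcomb] at this
    rw [show (1:ℝ) = B.coord i (B i) by simp [AffineBasis.coord_apply], this,
      Finset.affineCombination_eq_linear_combination _ _ _ hw1]
    simp [mul_comm]
  have htotal : ∑ y ∈ s, w y * (1 - B.coord i y) = 0 := by
    have he : ∀ y ∈ s, w y * (1 - B.coord i y) = w y - w y * B.coord i y := by
      intro y _; ring
    rw [Finset.sum_congr rfl he, Finset.sum_sub_distrib, hw1, hsum1]; ring
  have hzero : ∀ y ∈ s, w y * (1 - B.coord i y) = 0 :=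
    (Finset.sum_eq_zero_iff_of_nonneg (fun y hy =>
      mul_nonneg (hw0 y hy) (by linarith [hci y hy]))).1 htotal
  obtain ⟨y0, hy0s, hy0⟩ : ∃ y ∈ s, w y ≠ 0 := by
    by_contra hcon
    push_neg at hcon
    rw [Finset.sum_eq_zero hcon] at hw1
    norm_num at hw1
  have hcy0 : B.coord i y0 = 1 := by
    have := hzero y0 hy0s
    rcases mul_eq_zero.1 this with h | h
    · exact absurd h hy0
    · linarith
  have hyeq : B i = y0 := by
    apply B.ext_elem
    intro j
    rcases eq_or_ne j i with rfl | hj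
    · simp [AffineBasis.coord_apply, hcy0]
    · have hcj0 : B.coord j y0 = 0 := by
        have h1 : ∑ k, B.coord k y0 = 1 := B.sum_coord_apply_eq_one y0
        have h2 : ∑ k ∈ Finset.univ.erase i, B.coord k y0 = 0 := by
          rw [← Finset.add_sum_erase _ _ (Finset.mem_univ i)] at h1
          linarith [hcy0]
        have := (Finset.sum_eq_zero_iff_of_nonneg (fun k hk =>
          coord_nonneg D B hsx (hmem y0 hy0s) k)).1 h2 j (Finset.mem_erase.2 ⟨hj, Finset.mem_univ j⟩)
        exact this
      simp [AffineBasis.coord_apply, hj, hcj0]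
  rw [hs] at hy0s
  obtain ⟨z, _, hz⟩ := Finset.mem_image.1 hy0s
  exact ⟨z, by rw [hyeq, ← hz]⟩

lemma ipair_cast {n : ℕ} (a : Fin n → ℤ) (z : Fin n → ℤ) :
    ipair a (fun j => (z j : ℝ)) = ((∑ j, a j * z j : ℤ) : ℝ) := by
  simp [ipair]

/-- The right hand sides are integers. -/
lemma b_int (hn : 0 < n) (hopp : ∀ i j, i ≠ j → D.dF j (B i) = 0)
    (hsx : D.pts = convexHull ℝ (Set.range ⇑B)) (hlat : IsLatticePoly D.pts) (i : Fin (n+1)) :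
    ∃ c : ℤ, (D.b i : ℝ) = (c : ℝ) := by
  have h1 : (1 : Fin (n+1)) ≠ 0 := by
    simp [Fin.ext_iff, Fin.val_one, Nat.mod_eq_of_lt (by omega : 1 < n + 1)]
  set j : Fin (n+1) := if i = 0 then 1 else 0 with hj
  have hji : j ≠ i := by
    rcases eq_or_ne i 0 with rfl | h0
    · simpa [hj] using h1
    · simpa [hj, h0] using (Ne.symm h0)
  obtain ⟨z, hz⟩ := vertex_lattice D B hsx hlat j
  have h0 := hopp j i hji
  rw [show D.dF i (B j) = ipair (D.A i) (B j) - (D.b i : ℝ) from rfl] at h0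
  refine ⟨∑ k, D.A i k * z k, ?_⟩
  rw [← ipair_cast, ← hz]
  linarith

/-- The ℚ-codegree of the simplex equals `∑ 1/aᵢ`. -/
lemma qcd_eq (hopp : ∀ i j, i ≠ j → D.dF j (B i) = 0)
    (hsx : D.pts = convexHull ℝ (Set.range ⇑B)) :
    D.qcd = ∑ i, (D.dF i (B i))⁻¹ := by
  classical
  have hpos : ∀ i, 0 < D.dF i (B i) := fun i => apos D B hopp hsx i
  have hTpos : 0 < ∑ i, (D.dF i (B i))⁻¹ :=
    Finset.sum_pos (fun i _ => inv_pos.2 (hpos i)) Finset.univ_nonempty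
  have hgreat : IsGreatest D.qcdInvSet (∑ i, (D.dF i (B i))⁻¹)⁻¹ := by
    constructor
    · refine ⟨inv_pos.2 hTpos, ?_⟩
      have hw1 : ∑ i, (∑ k, (D.dF k (B k))⁻¹)⁻¹ * (D.dF i (B i))⁻¹ = 1 := by
        rw [← Finset.mul_sum]; exact inv_mul_cancel₀ (ne_of_gt hTpos)
      refine ⟨Finset.univ.affineCombination ℝ ⇑B
        (fun i => (∑ k, (D.dF k (B k))⁻¹)⁻¹ * (D.dF i (B i))⁻¹), ?_⟩
      rw [PolyDesc.adj, Set.mem_setOf_eq, PolyDesc.dist, Finset.le_inf'_iff]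
      intro i _
      rw [dF_coord D B hopp i, B.coord_apply_combination_of_mem (Finset.mem_univ i) hw1]
      have hne := ne_of_gt (hpos i)
      have heq : D.dF i (B i) * ((∑ k, (D.dF k (B k))⁻¹)⁻¹ * (D.dF i (B i))⁻¹)
          = (∑ k, (D.dF k (B k))⁻¹)⁻¹ := by
        rw [← mul_assoc, mul_comm (D.dF i (B i)), mul_assoc,
          mul_inv_cancel₀ hne, mul_one]
      rw [heq]
    · rintro s ⟨hs0, x, hx⟩
      rw [PolyDesc.adj, Set.mem_setOf_eq, PolyDesc.dist, Finset.le_inf'_iff] at hx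
      have hcx : ∀ i, s * (D.dF i (B i))⁻¹ ≤ B.coord i x := by
        intro i
        have h2 := hx i (Finset.mem_univ i)
        rw [dF_coord D B hopp i] at h2
        rw [← div_eq_mul_inv, div_le_iff₀ (hpos i)]
        linarith [h2]
      have hsum : s * ∑ i, (D.dF i (B i))⁻¹ ≤ 1 :=
        calc s * ∑ i, (D.dF i (B i))⁻¹ = ∑ i, s * (D.dF i (B i))⁻¹ := Finset.mul_sum _ _ _
          _ ≤ ∑ i, B.coord i x := Finset.sum_le_sum (fun i _ => hcx i)
          _ = 1 := B.sum_coord_apply_eq_one x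
      rw [← one_div, le_div_iff₀ hTpos]
      exact hsum
  have hinv : D.qcdInv = (∑ i, (D.dF i (B i))⁻¹)⁻¹ := hgreat.csSup_eq
  rw [PolyDesc.qcd, hinv, inv_inv]

lemma zmod2_cases : ∀ c : ZMod 2, c = 0 ∨ c = 1 := by decide

lemma zmod2_ne0 : ∀ a : ZMod 2, a ≠ 0 → a = 1 := by decide

lemma one_ne_zero_fin (hn : 0 < n) : (1 : Fin (n+1)) ≠ 0 := by
  simp [Fin.ext_iff, Fin.val_one, Nat.mod_eq_of_lt (by omega : 1 < n + 1)]

lemma exists_other (hn : 0 < n) (i : Fin (n+1)) : ∃ j : Fin (n+1), j ≠ i := by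
  rcases eq_or_ne i 0 with rfl | h0
  · exact ⟨1, one_ne_zero_fin hn⟩
  · exact ⟨0, Ne.symm h0⟩

lemma pyramid_of_a_eq_one (hopp : ∀ i j, i ≠ j → D.dF j (B i) = 0)
    (hsx : D.pts = convexHull ℝ (Set.range ⇑B)) {i : Fin (n+1)} {c : ℤ}
    (hb : (D.b i : ℝ) = (c : ℝ)) (ha : D.dF i (B i) = 1) :
    IsLatticePyramid D.pts := by
  classical
  have hdF : ∀ x, D.dF i x = B.coord i x := by
    intro x; rw [dF_coord D B hopp i x, ha, one_mul]
  have hip : ∀ x, ipair (D.A i) x = (c : ℝ) + B.coord i x := by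
    intro x
    have := hdF x
    rw [show D.dF i x = ipair (D.A i) x - (D.b i : ℝ) from rfl] at this
    rw [hb] at this; linarith
  refine ⟨D.A i, D.prim i, c, B i, mem_pts_vertex D B hsx i, ?_, ?_⟩
  · rw [hip (B i)]; simp [AffineBasis.coord_apply]
  · apply Set.Subset.antisymm
    · intro x hx
      have hc0 : ∀ j, 0 ≤ B.coord j x := fun j => coord_nonneg D B hsx hx j
      have hsum : ∑ j, B.coord j x = 1 := B.sum_coord_apply_eq_one x
      have ht1 : B.coord i x ≤ 1 := coord_le_one D B hsx hx i
      rcases eq_or_lt_of_le ht1 with h1 | h1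
      · have hxv : x = B i := by
          apply B.ext_elem
          intro j
          rcases eq_or_ne j i with rfl | hj
          · simp [AffineBasis.coord_apply, h1]
          · have hsplit : ∑ k ∈ Finset.univ.erase i, B.coord k x = 0 := by
              rw [← Finset.add_sum_erase _ _ (Finset.mem_univ i)] at hsum
              linarith
            have := (Finset.sum_eq_zero_iff_of_nonneg (fun k _ => hc0 k)).1 hsplit j
              (Finset.mem_erase.2 ⟨hj, Finset.mem_univ j⟩)
            simp [AffineBasis.coord_apply, hj, this]
        rw [hxv]
        exact subset_convexHull ℝ _ (Or.inr rfl)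
      · set t := B.coord i x with htdef
        have htne : (1 : ℝ) - t ≠ 0 := by rw [htdef]; intro h; rw [htdef] at h1; linarith
        set w : Fin (n+1) → ℝ := fun j => if j = i then 0 else B.coord j x / (1 - t) with hwdef
        have hsplit : ∑ k ∈ Finset.univ.erase i, B.coord k x = 1 - t := by
          rw [← Finset.add_sum_erase _ _ (Finset.mem_univ i)] at hsum
          rw [htdef]; linarith
        have hw1 : ∑ j, w j = 1 := by
          rw [← Finset.add_sum_erase _ _ (Finset.mem_univ i)]
          have : ∀ k ∈ Finset.univ.erase i, w k = B.coord k x / (1 - t) := by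
            intro k hk
            simp [hwdef, (Finset.mem_erase.1 hk).1]
          rw [Finset.sum_congr rfl this, ← Finset.sum_div, hsplit]
          simp [hwdef, div_self htne]
        set y := Finset.univ.affineCombination ℝ ⇑B w with hydef
        have hcy : ∀ j, B.coord j y = w j := fun j =>
          B.coord_apply_combination_of_mem (Finset.mem_univ j) hw1
        have hy_pts : y ∈ D.pts := by
          rw [pts_coord D B hsx]
          intro j
          rw [hcy j, hwdef]
          rcases eq_or_ne j i with rfl | hj
          · simp
          · simp only [hj, if_false]
            exact div_nonneg (hc0 j) (by rw [htdef]; linarith)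
        have hy_eq : ipair (D.A i) y = (c : ℝ) := by
          rw [hip y, hcy i]
          simp [hwdef]
        have hx2 : x = (1 - t) • y + t • B i := by
          rw [hydef, Finset.univ.affineCombination_eq_linear_combination _ _ hw1,
            ← B.linear_combination_coord_eq_self x, Finset.smul_sum]
          have hterm : (t • B i : Fin n → ℝ)
              = ∑ j, (if j = i then t else 0) • B j := by
            simp [ite_smul]
          rw [hterm, ← Finset.sum_add_distrib]
          apply Finset.sum_congr rfl
          intro j _
          rcases eq_or_ne j i with rfl | hj
          · simp [hwdef, htdef]
          · simp only [hwdef, hj, if_false, smul_smul, zero_smul, add_zero]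
            congr 1
            field_simp
        have hyU : y ∈ convexHull ℝ ({z ∈ D.pts | ipair (D.A i) z = (c : ℝ)} ∪ {B i}) :=
          subset_convexHull ℝ _ (Or.inl ⟨hy_pts, hy_eq⟩)
        have hvU : B i ∈ convexHull ℝ ({z ∈ D.pts | ipair (D.A i) z = (c : ℝ)} ∪ {B i}) :=
          subset_convexHull ℝ _ (Or.inr rfl)
        rw [hx2]
        exact (convex_convexHull ℝ _) hyU hvU (by rw [htdef]; linarith) (hc0 i) (by ring)
    · apply convexHull_min
      · rintro z (hz | hz)
        · exact hz.1
        · rw [Set.mem_singleton_iff] at hz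
          rw [hz]
          exact mem_pts_vertex D B hsx i
      · rw [hsx]
        exact convex_convexHull ℝ _

lemma width_of_a_eq_one (hn : 0 < n) (hopp : ∀ i j, i ≠ j → D.dF j (B i) = 0)
    (hsx : D.pts = convexHull ℝ (Set.range ⇑B)) {i : Fin (n+1)} {c : ℤ}
    (hb : (D.b i : ℝ) = (c : ℝ)) (ha : D.dF i (B i) = 1) :
    HasLatticeWidthOne D.pts := by
  have hip : ∀ x, ipair (D.A i) x = (c : ℝ) + B.coord i x := by
    intro x
    have h2 := dF_coord D B hopp i x
    rw [ha, one_mul, show D.dF i x = ipair (D.A i) x - (D.b i : ℝ) from rfl, hb] at h2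
    linarith
  obtain ⟨j, hj⟩ := exists_other hn i
  refine ⟨D.A i, (D.prim i).1, c, ?_, ⟨B j, mem_pts_vertex D B hsx j, ?_⟩,
    ⟨B i, mem_pts_vertex D B hsx i, ?_⟩⟩
  · intro x hx
    rw [hip x]
    have := coord_nonneg D B hsx hx i
    have := coord_le_one D B hsx hx i
    constructor <;> linarith
  · rw [hip (B j)]
    simp [AffineBasis.coord_apply, Ne.symm hj]
  · rw [hip (B i)]
    simp [AffineBasis.coord_apply]

lemma single_ipair_sum {n : ℕ} (a : Fin n → ℤ) (k : Fin n) :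
    (∑ l, a l * (Pi.single k 1 : Fin n → ℤ) l) = a k := by
  classical
  rw [Finset.sum_eq_single k]
  · simp
  · intro l _ hl; simp [Pi.single_apply, hl]
  · simp

lemma width_of_even (hn : 0 < n) (hopp : ∀ i j, i ≠ j → D.dF j (B i) = 0)
    (hsx : D.pts = convexHull ℝ (Set.range ⇑B))
    (vz : Fin (n+1) → Fin n → ℤ) (hvz : ∀ i, (B i : Fin n → ℝ) = fun j => ((vz i j : ℤ) : ℝ))
    (bz : Fin (n+1) → ℤ) (hbz : ∀ i, (D.b i : ℝ) = (bz i : ℝ))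
    (ha2 : ∀ i, D.dF i (B i) = 2)
    (S' : Finset (Fin n)) (hS : S'.Nonempty)
    (heven : ∀ z : Fin n → ℤ, ∃ t : ℤ,
      ∑ j ∈ S', ((∑ k, D.A j.succ k * z k) - bz j.succ) = 2 * t) :
    HasLatticeWidthOne D.pts := by
  classical
  have hcoord : ∀ (i : Fin (n+1)) x, D.dF i x = 2 * B.coord i x := by
    intro i x; rw [dF_coord D B hopp i x, ha2 i]
  -- the integer functional u
  have hAeven : ∀ k : Fin n, ∃ u : ℤ, ∑ j ∈ S', D.A j.succ k = 2 * u := by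
    intro k
    obtain ⟨t1, ht1⟩ := heven (Pi.single k 1)
    obtain ⟨t0, ht0⟩ := heven 0
    refine ⟨t1 - t0, ?_⟩
    have he : ∀ j ∈ S', (∑ l, D.A j.succ l * (Pi.single k 1 : Fin n → ℤ) l) - bz j.succ
        = D.A j.succ k - bz j.succ := by
      intro j _; rw [single_ipair_sum]
    rw [Finset.sum_congr rfl he, Finset.sum_sub_distrib] at ht1
    simp only [Pi.zero_apply, mul_zero, Finset.sum_const_zero, zero_sub] at ht0
    rw [Finset.sum_neg_distrib] at ht0
    linarith
  choose u hu using hAeven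
  -- key identity : ∀ x, ipair u x = c + ∑_{j ∈ S'} coord_{j.succ} x
  have hip2 : ∀ x, 2 * ipair u x = ∑ j ∈ S', ipair (D.A j.succ) x := by
    intro x
    calc 2 * ipair u x = ∑ k, ((2 * u k : ℤ) : ℝ) * x k := by
          rw [ipair, Finset.mul_sum]
          apply Finset.sum_congr rfl
          intro k _; push_cast; ring
      _ = ∑ k, ∑ j ∈ S', (D.A j.succ k : ℝ) * x k := by
          apply Finset.sum_congr rfl
          intro k _
          rw [← hu k]
          push_cast
          rw [Finset.sum_mul]
      _ = ∑ j ∈ S', ipair (D.A j.succ) x := Finset.sum_comm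
  have hip3 : ∀ x, 2 * ipair u x
      = (∑ j ∈ S', 2 * B.coord j.succ x) + ∑ j ∈ S', (bz j.succ : ℝ) := by
    intro x
    rw [hip2 x, ← Finset.sum_add_distrib]
    apply Finset.sum_congr rfl
    intro j _
    have := hcoord j.succ x
    rw [show D.dF j.succ x = ipair (D.A j.succ) x - (D.b j.succ : ℝ) from rfl, hbz] at this
    linarith
  set c : ℤ := ∑ k, u k * vz 0 k with hcdef
  have hc0 : ipair u (B 0) = (c : ℝ) := by
    rw [show (B 0 : Fin n → ℝ) = fun j => ((vz 0 j : ℤ) : ℝ) from hvz 0, ipair_cast]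
  have hCsum : ∑ j ∈ S', (bz j.succ : ℝ) = 2 * (c : ℝ) := by
    have h1 := hip3 (B 0)
    have h2 : ∀ j ∈ S', 2 * B.coord j.succ (B 0) = 0 := by
      intro j _
      have := hcoord j.succ (B 0)
      rw [hopp 0 j.succ (Fin.succ_ne_zero j).symm] at this
      linarith
    rw [Finset.sum_congr rfl h2, Finset.sum_const_zero, zero_add, hc0] at h1
    linarith
  have hkey : ∀ x, ipair u x = (c : ℝ) + ∑ j ∈ S', B.coord j.succ x := by
    intro x
    have h1 := hip3 x
    rw [hCsum] at h1
    have h2 : ∑ j ∈ S', 2 * B.coord j.succ x = 2 * ∑ j ∈ S', B.coord j.succ x := by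
      rw [Finset.mul_sum]
    rw [h2] at h1
    linarith
  -- bounds on the S'-sum
  have hbnd : ∀ x ∈ D.pts, 0 ≤ (∑ j ∈ S', B.coord j.succ x)
      ∧ (∑ j ∈ S', B.coord j.succ x) ≤ 1 := by
    intro x hx
    have hnn : ∀ i, 0 ≤ B.coord i x := fun i => coord_nonneg D B hsx hx i
    constructor
    · exact Finset.sum_nonneg (fun j _ => hnn j.succ)
    · have himg : ∑ j ∈ S', B.coord j.succ x = ∑ i ∈ S'.image Fin.succ, B.coord i x :=
        (Finset.sum_image (g := Fin.succ) (f := fun i => B.coord i x)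
          (fun a _ b _ h => Fin.succ_injective n h)).symm
      rw [himg]
      calc ∑ i ∈ S'.image Fin.succ, B.coord i x ≤ ∑ i, B.coord i x :=
            Finset.sum_le_sum_of_subset_of_nonneg (Finset.subset_univ _)
              (fun i _ _ => hnn i)
        _ = 1 := B.sum_coord_apply_eq_one x
  obtain ⟨s0, hs0⟩ := hS
  have hvalmax : ipair u (B s0.succ) = (c : ℝ) + 1 := by
    rw [hkey]
    have h2 : ∀ j ∈ S', B.coord j.succ (B s0.succ) = if j = s0 then 1 else 0 := by
      intro j _
      rw [AffineBasis.coord_apply]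
      congr 1
      simp [Fin.succ_inj]
    rw [Finset.sum_congr rfl h2, Finset.sum_ite_eq' S' s0 (fun _ => (1:ℝ)), if_pos hs0]
  have hu0 : u ≠ 0 := by
    intro h
    have hz : ∀ x, ipair u x = 0 := by intro x; simp [h, ipair]
    rw [hz] at hvalmax
    rw [hz] at hc0
    rw [← hc0] at hvalmax
    linarith
  refine ⟨u, hu0, c, ?_, ⟨B 0, mem_pts_vertex D B hsx 0, ?_⟩,
    ⟨B s0.succ, mem_pts_vertex D B hsx s0.succ, hvalmax⟩⟩
  · intro x hx
    obtain ⟨hl, hr⟩ := hbnd x hx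
    rw [hkey x]
    constructor <;> linarith
  · rw [hkey]
    have h2 : ∀ j ∈ S', B.coord j.succ (B 0) = 0 := by
      intro j _
      rw [AffineBasis.coord_apply, if_neg]
      exact Fin.succ_ne_zero j
    rw [Finset.sum_congr rfl h2, Finset.sum_const_zero, add_zero]

lemma M_real (bz : Fin (n+1) → ℤ) (hbz : ∀ i, (D.b i : ℝ) = (bz i : ℝ))
    (i : Fin (n+1)) (z : Fin n → ℤ) :
    (((∑ k, D.A i k * z k) - bz i : ℤ) : ℝ) = D.dF i (fun j => (z j : ℝ)) := by
  rw [show D.dF i (fun j => ((z j : ℤ) : ℝ))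
    = ipair (D.A i) (fun j => ((z j : ℤ) : ℝ)) - (D.b i : ℝ) from rfl, ipair_cast, hbz]
  push_cast
  ring

lemma M_coord (hopp : ∀ i j, i ≠ j → D.dF j (B i) = 0)
    (ha2 : ∀ i, D.dF i (B i) = 2)
    (bz : Fin (n+1) → ℤ) (hbz : ∀ i, (D.b i : ℝ) = (bz i : ℝ))
    (i : Fin (n+1)) (z : Fin n → ℤ) :
    (((∑ k, D.A i k * z k) - bz i : ℤ) : ℝ) = 2 * B.coord i (fun j => (z j : ℝ)) := by
  rw [M_real D bz hbz i z, dF_coord D B hopp i, ha2 i]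

lemma M_sum (hopp : ∀ i j, i ≠ j → D.dF j (B i) = 0)
    (ha2 : ∀ i, D.dF i (B i) = 2)
    (bz : Fin (n+1) → ℤ) (hbz : ∀ i, (D.b i : ℝ) = (bz i : ℝ)) (z : Fin n → ℤ) :
    (∑ i, ((∑ k, D.A i k * z k) - bz i)) = 2 := by
  have hr : ((∑ i, ((∑ k, D.A i k * z k) - bz i) : ℤ) : ℝ) = ((2 : ℤ) : ℝ) := by
    push_cast
    have he : ∀ i ∈ Finset.univ, (((∑ k, D.A i k * z k) - bz i : ℤ) : ℝ)
        = 2 * B.coord i (fun j => (z j : ℝ)) := fun i _ => M_coord D B hopp ha2 bz hbz i z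
    have he2 : (∑ i, ((∑ k, (D.A i k : ℝ) * (z k : ℝ)) - (bz i : ℝ)))
        = ∑ i, (((∑ k, D.A i k * z k) - bz i : ℤ) : ℝ) := by
      apply Finset.sum_congr rfl
      intro i _
      push_cast
      ring
    rw [he2, Finset.sum_congr rfl he, ← Finset.mul_sum, B.sum_coord_apply_eq_one]
    norm_num
  exact_mod_cast hr

lemma M_vertex (hopp : ∀ i j, i ≠ j → D.dF j (B i) = 0)
    (ha2 : ∀ i, D.dF i (B i) = 2)
    (vz : Fin (n+1) → Fin n → ℤ) (hvz : ∀ i, (B i : Fin n → ℝ) = fun j => ((vz i j : ℤ) : ℝ))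
    (bz : Fin (n+1) → ℤ) (hbz : ∀ i, (D.b i : ℝ) = (bz i : ℝ)) (i i' : Fin (n+1)) :
    (∑ k, D.A i k * vz i' k) - bz i = if i = i' then 2 else 0 := by
  have hr : (((∑ k, D.A i k * vz i' k) - bz i : ℤ) : ℝ)
      = ((if i = i' then 2 else 0 : ℤ) : ℝ) := by
    rw [M_coord D B hopp ha2 bz hbz i (vz i'), ← hvz i', AffineBasis.coord_apply]
    rcases eq_or_ne i i' with rfl | h
    · simp
    · simp [h]
  exact_mod_cast hr

lemma half_of_parity (hopp : ∀ i j, i ≠ j → D.dF j (B i) = 0)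
    (ha2 : ∀ i, D.dF i (B i) = 2)
    (vz : Fin (n+1) → Fin n → ℤ) (hvz : ∀ i, (B i : Fin n → ℝ) = fun j => ((vz i j : ℤ) : ℝ))
    (bz : Fin (n+1) → ℤ) (hbz : ∀ i, (D.b i : ℝ) = (bz i : ℝ)) (j : Fin n)
    (z : Fin n → ℤ)
    (hz : ∀ k : Fin n, ((((∑ l, D.A k.succ l * z l) - bz k.succ : ℤ)) : ZMod 2)
      = if k = j then 1 else 0) :
    ∃ h : Fin n → ℤ, ∀ k, ((h k : ℝ)) = (B j.succ k - B 0 k) / 2 := by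
  classical
  set m : Fin (n+1) → ℤ := fun i => (∑ l, D.A i l * z l) - bz i with hm
  set ε : Fin (n+1) → ℤ := fun i => if i = 0 ∨ i = j.succ then 1 else 0 with hε
  have hm0 : ((m 0 : ℤ) : ZMod 2) = 1 := by
    have hsum : ∑ i, m i = 2 := M_sum D B hopp ha2 bz hbz z
    rw [Fin.sum_univ_succ] at hsum
    have : ((m 0 : ℤ) : ZMod 2) = ((2 - ∑ k : Fin n, m k.succ : ℤ) : ZMod 2) := by
      congr 1; omega
    rw [this]
    push_cast
    have : (∑ k : Fin n, ((m k.succ : ℤ) : ZMod 2)) = ∑ k : Fin n, if k = j then 1 else 0 :=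
      Finset.sum_congr rfl (fun k _ => hz k)
    rw [this, Finset.sum_ite_eq' Finset.univ j (fun _ => (1 : ZMod 2)), if_pos (Finset.mem_univ j)]
    decide
  have hpar : ∀ i, ∃ q : ℤ, m i = 2 * q + ε i := by
    intro i
    have hdvd : ((m i - ε i : ℤ) : ZMod 2) = 0 := by
      rcases Fin.eq_zero_or_eq_succ i with rfl | ⟨k, rfl⟩
      · have : ε 0 = 1 := by simp [hε]
        rw [this]
        push_cast
        rw [hm0]
        decide
      · have hεs : ε k.succ = if k = j then 1 else 0 := by
          simp only [hε, Fin.succ_ne_zero, false_or, Fin.succ_inj]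
        rw [hεs]
        push_cast
        rw [hz k]
        rcases eq_or_ne k j with rfl | h
        · simp
        · simp [h]
    rw [ZMod.intCast_zmod_eq_zero_iff_dvd] at hdvd
    obtain ⟨q, hq⟩ := hdvd
    exact ⟨q, by omega⟩
  choose q hq using hpar
  refine ⟨fun k => z k - (∑ i, q i * vz i k) - vz 0 k, ?_⟩
  intro k
  have hvzk : ∀ i, ((vz i k : ℤ) : ℝ) = B i k := by
    intro i; rw [hvz i]
  have hcoordz : ∀ i, B.coord i (fun l => ((z l : ℤ) : ℝ)) = ((m i : ℤ) : ℝ) / 2 := by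
    intro i
    have h2 : ((m i : ℤ) : ℝ) = 2 * B.coord i (fun l => ((z l : ℤ) : ℝ)) :=
      M_coord D B hopp ha2 bz hbz i z
    linarith
  have hrepr : ((z k : ℤ) : ℝ) = ∑ i, ((m i : ℤ) : ℝ) / 2 * B i k := by
    have h1 := B.linear_combination_coord_eq_self (fun l => ((z l : ℤ) : ℝ))
    have h2 := congrFun h1 k
    rw [Finset.sum_apply] at h2
    rw [← h2]
    apply Finset.sum_congr rfl
    intro i _
    rw [Pi.smul_apply, smul_eq_mul, hcoordz i]
  have hεsum : ∑ i, ((ε i : ℤ) : ℝ) / 2 * B i k = (B 0 k + B j.succ k) / 2 := by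
    rw [Fin.sum_univ_succ]
    have h0 : ((ε 0 : ℤ) : ℝ) / 2 * B 0 k = B 0 k / 2 := by simp [hε]; ring
    have hs : ∀ l : Fin n, ((ε l.succ : ℤ) : ℝ) / 2 * B l.succ k
        = if l = j then B l.succ k / 2 else 0 := by
      intro l
      simp only [hε, Fin.succ_ne_zero, false_or, Fin.succ_inj]
      rcases eq_or_ne l j with rfl | h
      · simp; ring
      · simp [h]
    rw [h0, Finset.sum_congr rfl (fun l _ => hs l),
      Finset.sum_ite_eq' Finset.univ j (fun l => B l.succ k / 2), if_pos (Finset.mem_univ j)]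
    ring
  have hqr : ∀ i, ((m i : ℤ) : ℝ) / 2 - (q i : ℝ) = ((ε i : ℤ) : ℝ) / 2 := by
    intro i
    have := hq i
    have hr : ((m i : ℤ) : ℝ) = 2 * (q i : ℝ) + ((ε i : ℤ) : ℝ) := by exact_mod_cast congrArg (Int.cast : ℤ → ℝ) this
    linarith
  have hmain : ∑ i, ((m i : ℤ) : ℝ) / 2 * B i k - ∑ i, (q i : ℝ) * ((vz i k : ℤ) : ℝ)
      = ∑ i, ((ε i : ℤ) : ℝ) / 2 * B i k := by
    rw [← Finset.sum_sub_distrib]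
    apply Finset.sum_congr rfl
    intro i _
    rw [hvzk i, ← sub_mul, hqr i]
  show ((z k - (∑ i, q i * vz i k) - vz 0 k : ℤ) : ℝ) = (B j.succ k - B 0 k) / 2
  push_cast
  rw [hrepr]
  linarith [hmain, hεsum, hvzk 0]

lemma unimod_of_full (hopp : ∀ i j, i ≠ j → D.dF j (B i) = 0)
    (hsx : D.pts = convexHull ℝ (Set.range ⇑B))
    (vz : Fin (n+1) → Fin n → ℤ) (hvz : ∀ i, (B i : Fin n → ℝ) = fun j => ((vz i j : ℤ) : ℝ))
    (bz : Fin (n+1) → ℤ) (hbz : ∀ i, (D.b i : ℝ) = (bz i : ℝ))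
    (ha2 : ∀ i, D.dF i (B i) = 2)
    (hhalf : ∀ j : Fin n, ∃ h : Fin n → ℤ, ∀ k, ((h k : ℝ)) = (B j.succ k - B 0 k) / 2) :
    UnimodEquiv D.pts ((2 : ℝ) • unimodSimplex n) := by
  classical
  have hcoord : ∀ (i : Fin (n+1)) x, D.dF i x = 2 * B.coord i x := fun i x => by
    rw [dF_coord D B hopp i x, ha2 i]
  have hdFv : ∀ (i i' : Fin (n+1)), D.dF i (B i') = if i = i' then 2 else 0 := by
    intro i i'
    rcases eq_or_ne i i' with rfl | h
    · simp [ha2 i]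
    · simp [h, hopp i' i (Ne.symm h)]
  have hipadd : ∀ (a : Fin n → ℤ) (x y : Fin n → ℝ),
      ipair a (x + y) = ipair a x + ipair a y := by
    intro a x y; simp [ipair, mul_add, Finset.sum_add_distrib]
  set L : (Fin n → ℝ) →ₗ[ℝ] (Fin n → ℝ) := LinearMap.pi (fun j => ipairL (D.A j.succ)) with hLdef
  have hLapp : ∀ x j, L x j = ipair (D.A j.succ) x := by intro x j; rfl
  have hinj : Function.Injective L := by
    intro x1 x2 h12
    have hx : L (x1 - x2) = 0 := by rw [map_sub, h12, sub_self]
    have hds : ∀ (i : Fin (n+1)) y, D.dF i (x1 - x2 + y)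
        = ipair (D.A i) (x1 - x2) + D.dF i y := by
      intro i y
      show ipair (D.A i) (x1 - x2 + y) - (D.b i : ℝ)
        = ipair (D.A i) (x1 - x2) + (ipair (D.A i) y - (D.b i : ℝ))
      rw [hipadd]
      ring
    have hsucc : ∀ j : Fin n, B.coord j.succ (x1 - x2 + B 0) = B.coord j.succ (B 0) := by
      intro j
      have h1 := hcoord j.succ (x1 - x2 + B 0)
      have h2 := hcoord j.succ (B 0)
      have h3 := hds j.succ (B 0)
      have h4 : ipair (D.A j.succ) (x1 - x2) = 0 := by
        rw [← hLapp (x1 - x2) j, hx]; rfl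
      rw [h4, zero_add] at h3
      linarith
    have hcc : ∀ i, B.coord i (x1 - x2 + B 0) = B.coord i (B 0) := by
      intro i
      rcases Fin.eq_zero_or_eq_succ i with rfl | ⟨j, rfl⟩
      · have e1 := B.sum_coord_apply_eq_one (x1 - x2 + B 0)
        have e2 := B.sum_coord_apply_eq_one (B 0)
        rw [Fin.sum_univ_succ] at e1 e2
        have e3 : ∑ j : Fin n, B.coord j.succ (x1 - x2 + B 0)
            = ∑ j : Fin n, B.coord j.succ (B 0) :=
          Finset.sum_congr rfl (fun j _ => hsucc j)
        linarith
      · exact hsucc j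
    have h5 : x1 - x2 + B 0 = B 0 := B.ext_elem hcc
    have h6 := congrArg (fun y => y - B 0) h5
    simp only [add_sub_cancel_right, sub_self] at h6
    exact sub_eq_zero.mp h6
  have hsurjL : Function.Surjective L := LinearMap.injective_iff_surjective.1 hinj
  set LE : (Fin n → ℝ) ≃ₗ[ℝ] (Fin n → ℝ) := LinearEquiv.ofBijective L ⟨hinj, hsurjL⟩ with hLE
  set cvec : Fin n → ℝ := fun j => -(bz j.succ : ℝ) with hcvec
  set f : (Fin n → ℝ) ≃ᵃ[ℝ] (Fin n → ℝ) :=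
    LE.toAffineEquiv.trans (AffineEquiv.constVAdd ℝ (Fin n → ℝ) cvec) with hfdef
  have hfapp : ∀ x j, f x j = D.dF j.succ x := by
    intro x j
    have h1 : f x j = cvec j + L x j := rfl
    rw [h1, hLapp, hcvec]
    show -(bz j.succ : ℝ) + ipair (D.A j.succ) x
      = ipair (D.A j.succ) x - (D.b j.succ : ℝ)
    rw [hbz j.succ]
    ring
  refine ⟨f, ?_, ?_⟩
  · apply Set.Subset.antisymm
    · rintro y ⟨x, ⟨z, rfl⟩, rfl⟩
      refine ⟨fun j => (∑ k, D.A j.succ k * z k) - bz j.succ, ?_⟩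
      funext j
      rw [hfapp]
      exact M_real D bz hbz j.succ z
    · rintro w ⟨wz, rfl⟩
      choose hv hhv using hhalf
      refine ⟨(fun k => ((vz 0 k + ∑ l, wz l * hv l k : ℤ) : ℝ)), ⟨_, rfl⟩, ?_⟩
      funext j
      rw [hfapp]
      have hiphalf : ∀ l : Fin n, ipair (D.A j.succ) (fun k => ((hv l k : ℤ) : ℝ))
          = if j = l then 1 else 0 := by
        intro l
        have e1 : ipair (D.A j.succ) (fun k => ((hv l k : ℤ) : ℝ))
            = (ipair (D.A j.succ) (B l.succ) - ipair (D.A j.succ) (B 0)) / 2 := by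
          rw [ipair]
          have he : ∀ k ∈ Finset.univ, (D.A j.succ k : ℝ) * ((hv l k : ℤ) : ℝ)
              = (D.A j.succ k : ℝ) * B l.succ k / 2 - (D.A j.succ k : ℝ) * B 0 k / 2 := by
            intro k _
            rw [hhv l k]
            ring
          rw [Finset.sum_congr rfl he, Finset.sum_sub_distrib, ipair, ipair,
            ← Finset.sum_div, ← Finset.sum_div]
          ring
        have e2 : ipair (D.A j.succ) (B l.succ) = D.dF j.succ (B l.succ) + (D.b j.succ : ℝ) := by
          show _ = ipair (D.A j.succ) (B l.succ) - (D.b j.succ : ℝ) + (D.b j.succ : ℝ); ring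
        have e3 : ipair (D.A j.succ) (B 0) = D.dF j.succ (B 0) + (D.b j.succ : ℝ) := by
          show _ = ipair (D.A j.succ) (B 0) - (D.b j.succ : ℝ) + (D.b j.succ : ℝ); ring
        rw [e1, e2, e3, hdFv j.succ l.succ, hdFv j.succ 0]
        rw [if_neg (Fin.succ_ne_zero j)]
        have : (if j.succ = l.succ then (2:ℝ) else 0) = if j = l then 2 else 0 := by
          simp [Fin.succ_inj]
        rw [this]
        rcases eq_or_ne j l with rfl | h
        · simp
        · simp [h]
      have hipsplit : ipair (D.A j.succ) (fun k => ((vz 0 k + ∑ l, wz l * hv l k : ℤ) : ℝ))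
          = ipair (D.A j.succ) (fun k => ((vz 0 k : ℤ) : ℝ))
            + ∑ l, (wz l : ℝ) * ipair (D.A j.succ) (fun k => ((hv l k : ℤ) : ℝ)) := by
        rw [ipair, ipair]
        have he : ∀ k ∈ Finset.univ, (D.A j.succ k : ℝ) * ((vz 0 k + ∑ l, wz l * hv l k : ℤ) : ℝ)
            = (D.A j.succ k : ℝ) * ((vz 0 k : ℤ) : ℝ)
              + ∑ l, (wz l : ℝ) * ((D.A j.succ k : ℝ) * ((hv l k : ℤ) : ℝ)) := by
          intro k _
          push_cast
          rw [mul_add, Finset.mul_sum, Finset.sum_congr rfl (fun l _ => by ring : ∀ l ∈ Finset.univ, (D.A j.succ k : ℝ) * ((wz l : ℝ) * (hv l k : ℝ)) = (wz l : ℝ) * ((D.A j.succ k : ℝ) * ((hv l k : ℤ) : ℝ)))]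
        rw [Finset.sum_congr rfl he, Finset.sum_add_distrib]
        congr 1
        rw [Finset.sum_comm]
        apply Finset.sum_congr rfl
        intro l _
        rw [ipair, Finset.mul_sum]
      show ipair (D.A j.succ) _ - (D.b j.succ : ℝ) = _
      rw [hipsplit, Finset.sum_congr rfl (fun l _ => by rw [hiphalf l]),
        show ipair (D.A j.succ) (fun k => ((vz 0 k : ℤ) : ℝ)) = ipair (D.A j.succ) (B 0) by rw [hvz 0]]
      have e3 : ipair (D.A j.succ) (B 0) = D.dF j.succ (B 0) + (D.b j.succ : ℝ) := by
        show _ = ipair (D.A j.succ) (B 0) - (D.b j.succ : ℝ) + (D.b j.succ : ℝ); ring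
      rw [e3, hdFv j.succ 0, if_neg (Fin.succ_ne_zero j)]
      have e4 : ∑ l, (wz l : ℝ) * (if j = l then (1:ℝ) else 0) = (wz j : ℝ) := by
        have he4 : ∀ l ∈ Finset.univ, (wz l : ℝ) * (if j = l then (1:ℝ) else 0)
            = if j = l then (wz l : ℝ) else 0 := by
          intro l _
          rcases eq_or_ne j l with rfl | h
          · simp
          · simp [h]
        rw [Finset.sum_congr rfl he4,
          Finset.sum_ite_eq Finset.univ j (fun l => (wz l : ℝ)), if_pos (Finset.mem_univ j)]
      rw [e4]
      ring
  · have himg : ⇑f '' D.pts = convexHull ℝ (⇑f '' Set.range ⇑B) := by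
      rw [hsx, ← AffineEquiv.coe_toAffineMap, AffineMap.image_convexHull]
    rw [himg]
    have hf0 : f (B 0) = 0 := by
      funext j
      rw [hfapp, hdFv j.succ 0, if_neg (Fin.succ_ne_zero j)]
      rfl
    have hfs : ∀ i : Fin n, f (B i.succ) = (2 : ℝ) • stdBasisVec n i := by
      intro i
      funext j
      rw [hfapp, hdFv j.succ i.succ]
      have : (if j.succ = i.succ then (2:ℝ) else 0) = if j = i then 2 else 0 := by
        simp [Fin.succ_inj]
      rw [this]
      show _ = (2:ℝ) * stdBasisVec n i j
      rw [stdBasisVec]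
      rcases eq_or_ne j i with rfl | h
      · simp
      · simp [h]
    have hrange : ⇑f '' Set.range ⇑B
        = insert (0 : Fin n → ℝ) (Set.range fun i : Fin n => (2 : ℝ) • stdBasisVec n i) := by
      rw [← Set.range_comp, Fin.range_fin_succ]
      have h1 : (⇑f ∘ ⇑B) 0 = (0 : Fin n → ℝ) := hf0
      have h2 : Fin.tail (⇑f ∘ ⇑B) = fun i : Fin n => (2 : ℝ) • stdBasisVec n i := by
        funext i
        exact hfs i
      rw [h1, h2]
    rw [hrange, unimodSimplex, ← convexHull_smul]
    congr 1
    rw [Set.smul_set_insert, smul_zero, Set.smul_set_range]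

lemma main2 (hn : 0 < n) (hopp : ∀ i j, i ≠ j → D.dF j (B i) = 0)
    (hsx : D.pts = convexHull ℝ (Set.range ⇑B))
    (vz : Fin (n+1) → Fin n → ℤ) (hvz : ∀ i, (B i : Fin n → ℝ) = fun j => ((vz i j : ℤ) : ℝ))
    (bz : Fin (n+1) → ℤ) (hbz : ∀ i, (D.b i : ℝ) = (bz i : ℝ))
    (ha2 : ∀ i, D.dF i (B i) = 2)
    (hne : ¬ UnimodEquiv D.pts ((2 : ℝ) • unimodSimplex n)) :
    HasLatticeWidthOne D.pts := by
  classical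
  haveI : Fact (Nat.Prime 2) := ⟨Nat.prime_two⟩
  set Gset : Set (Fin n → ZMod 2) :=
    {g | ∃ z : Fin n → ℤ, ∀ j : Fin n,
      g j = ((((∑ l, D.A j.succ l * z l) - bz j.succ : ℤ)) : ZMod 2)} with hGset
  by_cases hfull : ∀ j : Fin n, (fun k => if k = j then (1 : ZMod 2) else 0) ∈ Gset
  · exfalso
    apply hne
    apply unimod_of_full D B hopp hsx vz hvz bz hbz ha2
    intro j
    obtain ⟨z, hz⟩ := hfull j
    exact half_of_parity D B hopp ha2 vz hvz bz hbz j z (fun k => (hz k).symm)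
  · push_neg at hfull
    obtain ⟨j0, hj0⟩ := hfull
    set G : Submodule (ZMod 2) (Fin n → ZMod 2) :=
      { carrier := Gset
        add_mem' := by
          rintro g1 g2 ⟨z1, hz1⟩ ⟨z2, hz2⟩
          refine ⟨z1 + z2 - vz 0, ?_⟩
          intro j
          have hvert := M_vertex D B hopp ha2 vz hvz bz hbz j.succ 0
          rw [if_neg (Fin.succ_ne_zero j)] at hvert
          have hlin : (∑ l, D.A j.succ l * (z1 + z2 - vz 0) l) - bz j.succ
              = ((∑ l, D.A j.succ l * z1 l) - bz j.succ)
                + ((∑ l, D.A j.succ l * z2 l) - bz j.succ)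
                - ((∑ l, D.A j.succ l * vz 0 l) - bz j.succ) := by
            simp only [Pi.add_apply, Pi.sub_apply, mul_add, mul_sub,
              Finset.sum_add_distrib, Finset.sum_sub_distrib]
            ring
          rw [Pi.add_apply, hz1 j, hz2 j, hlin, hvert]
          push_cast
          ring
        zero_mem' := by
          refine ⟨vz 0, ?_⟩
          intro j
          have hvert := M_vertex D B hopp ha2 vz hvz bz hbz j.succ 0
          rw [if_neg (Fin.succ_ne_zero j)] at hvert
          rw [hvert]
          simp
        smul_mem' := by
          intro c g hg
          rcases zmod2_cases c with rfl | rfl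
          · simp only [zero_smul]
            exact ⟨vz 0, fun j => by
              have hvert := M_vertex D B hopp ha2 vz hvz bz hbz j.succ 0
              rw [if_neg (Fin.succ_ne_zero j)] at hvert
              rw [hvert]; simp⟩
          · simpa using hg } with hG
    have hGne : G ≠ ⊤ := by
      intro h
      apply hj0
      show _ ∈ Gset
      have : (fun k => if k = j0 then (1 : ZMod 2) else 0) ∈ G := by
        rw [h]; trivial
      exact this
    obtain ⟨φ, hφne, hφmap⟩ :=
      Submodule.exists_dual_map_eq_bot_of_lt_top (lt_top_iff_ne_top.2 hGne) inferInstance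
    have hvanish : ∀ g ∈ Gset, φ g = 0 := by
      intro g hg
      have : φ g ∈ G.map φ := ⟨g, hg, rfl⟩
      rw [hφmap] at this
      exact (Submodule.mem_bot (ZMod 2)).1 this
    set S' : Finset (Fin n) :=
      Finset.univ.filter (fun k => φ (fun l => if k = l then 1 else 0) ≠ 0) with hS'
    have hφval : ∀ g, φ g = ∑ k ∈ S', g k := by
      intro g
      rw [LinearMap.pi_apply_eq_sum_univ φ g,
        ← Finset.sum_filter_add_sum_filter_not Finset.univ
          (fun k => φ (fun l => if k = l then 1 else 0) ≠ 0)]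
      have h2 : ∑ k ∈ Finset.univ.filter
          (fun k => ¬ φ (fun l => if k = l then 1 else 0) ≠ 0),
          g k • φ (fun l => if k = l then 1 else 0) = 0 := by
        apply Finset.sum_eq_zero
        intro k hk
        rw [Finset.mem_filter] at hk
        push_neg at hk
        rw [hk.2, smul_zero]
      rw [h2, add_zero]
      apply Finset.sum_congr rfl
      intro k hk
      rw [Finset.mem_filter] at hk
      rw [zmod2_ne0 _ hk.2, smul_eq_mul, mul_one]
    have hS'ne : S'.Nonempty := by
      rw [Finset.nonempty_iff_ne_empty]
      intro h
      apply hφne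
      apply LinearMap.ext
      intro g
      rw [hφval g, h]
      simp
    have heven : ∀ z : Fin n → ℤ, ∃ t : ℤ,
        ∑ j ∈ S', ((∑ k, D.A j.succ k * z k) - bz j.succ) = 2 * t := by
      intro z
      have hg : (fun j => ((((∑ l, D.A j.succ l * z l) - bz j.succ : ℤ)) : ZMod 2)) ∈ Gset :=
        ⟨z, fun j => rfl⟩
      have h0 := hvanish _ hg
      rw [hφval] at h0
      have h1 : ((∑ j ∈ S', ((∑ k, D.A j.succ k * z k) - bz j.succ) : ℤ) : ZMod 2) = 0 := by
        push_cast
        rw [← h0]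
        push_cast
        rfl
      rw [ZMod.intCast_zmod_eq_zero_iff_dvd] at h1
      obtain ⟨t, ht⟩ := h1
      exact ⟨t, ht⟩
    exact width_of_even D B hn hopp hsx vz hvz bz hbz ha2 S' hS'ne heven

end S19

/-- Let `P ⊆ ℝⁿ` be an `n`-dimensional lattice simplex with facets
`F₀, …, Fₙ` and opposite vertices `v₀, …, vₙ`, and let `aᵢ = d_{Fᵢ}(vᵢ)`. Then:
(1) if `μ(P) > (n+1)/2`, or `μ(P) = (n+1)/2` and `aᵢ ≠ 2` for some `i`, then `P` is
a lattice pyramid; (2) if `μ(P) ≥ (n+1)/2` and `P` is not unimodularly equivalent to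
`2Δₙ`, then `P` has lattice width one. -/
theorem statement19 {n : ℕ} (D : PolyDesc n (n + 1)) (hlat : IsLatticePoly D.pts)
    (v : Fin (n + 1) → (Fin n → ℝ))
    (hsimplex : D.pts = convexHull ℝ (Set.range v))
    (hopp : ∀ i j : Fin (n + 1), i ≠ j → D.dF j (v i) = 0) :
    ((((n : ℝ) + 1) / 2 < D.qcd ∨
        (D.qcd = ((n : ℝ) + 1) / 2 ∧ ∃ i, D.dF i (v i) ≠ 2)) →
      IsLatticePyramid D.pts) ∧
    ((((n : ℝ) + 1) / 2 ≤ D.qcd ∧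
        ¬ UnimodEquiv D.pts ((2 : ℝ) • unimodSimplex n)) →
      HasLatticeWidthOne D.pts) := by
  classical
  rcases Nat.eq_zero_or_pos n with hn0 | hn
  · subst hn0
    exact absurd (Subsingleton.elim (D.A 0) 0) (D.prim 0).1
  have hcard : Fintype.card (Fin (n+1)) = n + 1 := by simp
  have hvspan : vectorSpan ℝ (Set.range v) = vectorSpan ℝ D.pts := by
    rw [hsimplex, ← direction_affineSpan, ← direction_affineSpan, affineSpan_convexHull]
  have hrank : Module.finrank ℝ (vectorSpan ℝ (Set.range v)) = n := by
    rw [hvspan]; exact D.fulldim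
  have hind : AffineIndependent ℝ v :=
    (affineIndependent_iff_finrank_vectorSpan_eq ℝ v hcard).2 hrank
  have htop : vectorSpan ℝ (Set.range v) = ⊤ := by
    apply Submodule.eq_top_of_finrank_eq
    rw [hrank, Module.finrank_fin_fun]
  have hspan : affineSpan ℝ (Set.range v) = ⊤ := by
    rw [AffineSubspace.affineSpan_eq_top_iff_vectorSpan_eq_top_of_nonempty ℝ (Fin n → ℝ) (Fin n → ℝ)
      (Set.range_nonempty v)]
    exact htop
  set B : AffineBasis (Fin (n+1)) ℝ (Fin n → ℝ) := ⟨v, hind, hspan⟩ with hB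
  have hBv : ⇑B = v := rfl
  have hopp' : ∀ i j, i ≠ j → D.dF j (B i) = 0 := by
    intro i j h
    rw [show (B i : Fin n → ℝ) = v i from rfl]
    exact hopp i j h
  have hsx : D.pts = convexHull ℝ (Set.range ⇑B) := by rw [hBv]; exact hsimplex
  choose vz hvz using fun i => S19.vertex_lattice D B hsx hlat i
  choose bz hbz using fun i => S19.b_int D B hn hopp' hsx hlat i
  have haZ : ∀ i, ∃ a : ℕ, 0 < a ∧ D.dF i (B i) = (a : ℝ) := by
    intro i
    have h1 : D.dF i (B i) = (((∑ k, D.A i k * vz i k) - bz i : ℤ) : ℝ) := by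
      conv_lhs => rw [hvz i]
      rw [S19.M_real D bz hbz i (vz i)]
    have hpos := S19.apos D B hopp' hsx i
    have hMpos : 0 < (∑ k, D.A i k * vz i k) - bz i := by
      rw [h1] at hpos; exact_mod_cast hpos
    refine ⟨((∑ k, D.A i k * vz i k) - bz i).toNat, by omega, ?_⟩
    rw [h1]
    exact_mod_cast (Int.toNat_of_nonneg hMpos.le).symm
  choose aN haNpos haN using haZ
  have hqcd : D.qcd = ∑ i, ((aN i : ℝ))⁻¹ := by
    rw [S19.qcd_eq D B hopp' hsx]
    exact Finset.sum_congr rfl (fun i _ => by rw [haN i])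
  have hhalfsum : ∑ _i : Fin (n+1), (1:ℝ)/2 = ((n:ℝ)+1)/2 := by
    rw [Finset.sum_const, Finset.card_univ, hcard, nsmul_eq_mul]
    push_cast
    ring
  have hinvle : ∀ i, 2 ≤ aN i → ((aN i : ℝ))⁻¹ ≤ 1/2 := by
    intro i h2
    have hca : (2:ℝ) ≤ (aN i : ℝ) := by exact_mod_cast h2
    rw [one_div]
    exact inv_anti₀ two_pos hca
  have hinvlt : ∀ i, 3 ≤ aN i → ((aN i : ℝ))⁻¹ < 1/2 := by
    intro i h3
    have hca : (3:ℝ) ≤ (aN i : ℝ) := by exact_mod_cast h3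
    have : ((aN i : ℝ))⁻¹ ≤ 1/3 := by
      rw [one_div]
      exact inv_anti₀ (by norm_num) hca
    linarith
  have hwidth1 : ∀ i, aN i = 1 → HasLatticeWidthOne D.pts := by
    intro i hi
    obtain ⟨c, hc⟩ : ∃ c : ℤ, (D.b i : ℝ) = (c : ℝ) := ⟨bz i, hbz i⟩
    exact S19.width_of_a_eq_one D B hn hopp' hsx hc (by rw [haN i, hi]; norm_num)
  have hpyr1 : ∀ i, aN i = 1 → IsLatticePyramid D.pts := by
    intro i hi
    exact S19.pyramid_of_a_eq_one D B hopp' hsx (hbz i) (by rw [haN i, hi]; norm_num)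
  constructor
  · rintro (hgt | ⟨heq, i0, hne2⟩)
    · rw [hqcd] at hgt
      have hexists : ∃ i, aN i = 1 := by
        by_contra hno
        push_neg at hno
        have h2 : ∀ i, 2 ≤ aN i := fun i => by have := haNpos i; have := hno i; omega
        have hle : ∑ i, ((aN i : ℝ))⁻¹ ≤ ∑ _i : Fin (n+1), (1:ℝ)/2 :=
          Finset.sum_le_sum (fun i _ => hinvle i (h2 i))
        rw [hhalfsum] at hle
        linarith
      obtain ⟨i, hi⟩ := hexists
      exact hpyr1 i hi
    · rw [hqcd] at heq
      have hne2' : aN i0 ≠ 2 := by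
        intro h
        apply hne2
        rw [← hBv]
        rw [haN i0, h]
        norm_num
      have hexists : ∃ i, aN i = 1 := by
        by_contra hno
        push_neg at hno
        have h2 : ∀ i, 2 ≤ aN i := fun i => by have := haNpos i; have := hno i; omega
        have h3 : 3 ≤ aN i0 := by have := h2 i0; have := hne2'; omega
        have hlt : ∑ i, ((aN i : ℝ))⁻¹ < ∑ _i : Fin (n+1), (1:ℝ)/2 :=
          Finset.sum_lt_sum (fun i _ => hinvle i (h2 i))
            ⟨i0, Finset.mem_univ i0, hinvlt i0 h3⟩
        rw [hhalfsum] at hlt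
        linarith
      obtain ⟨i, hi⟩ := hexists
      exact hpyr1 i hi
  · rintro ⟨hge, hnequiv⟩
    rw [hqcd] at hge
    by_cases hex1 : ∃ i, aN i = 1
    · obtain ⟨i, hi⟩ := hex1
      exact hwidth1 i hi
    · push_neg at hex1
      have h2 : ∀ i, 2 ≤ aN i := fun i => by have := haNpos i; have := hex1 i; omega
      have hall2 : ∀ i, aN i = 2 := by
        by_contra hno
        push_neg at hno
        obtain ⟨i0, hne0⟩ := hno
        have h3 : 3 ≤ aN i0 := by have := h2 i0; omega
        have hlt : ∑ i, ((aN i : ℝ))⁻¹ < ∑ _i : Fin (n+1), (1:ℝ)/2 :=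
          Finset.sum_lt_sum (fun i _ => hinvle i (h2 i))
            ⟨i0, Finset.mem_univ i0, hinvlt i0 h3⟩
        rw [hhalfsum] at hlt
        linarith
      exact S19.main2 D B hn hopp' hsx vz hvz bz hbz
        (fun i => by rw [haN i, hall2 i]; norm_num) hnequiv


end
end
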